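/- Let α, β, A, B be real numbers with (α,β) ≠ (0,0) and (A,B) ≠ (0,0), and let L₁ = {(x,y) ∈ ℝ² : αx + βy = 0} and L₂ = {(x,y) ∈ ℝ² : Ax + By = 0} be lines through the origin. Set ψ = αA + βB, ω = αB − βA, and Δ = (α² + β²)(A² + B²). Then the Douglas–Rachford operator T = (1/2)(I + R_{L₂} R_{L₁}) is the linear map on ℝ² whose standard matrix is (ψ/Δ)·[[ψ, −ω],[ω, ψ]] (a scaled rotation). Consequently ‖T x‖² = (ψ²/Δ)‖x‖² for every x ∈ ℝ², and ψ²/Δ ≤ 1 with equality if and only if L₁ = L₂; in particular the eigenvalues of T have modulus squared equal to ψ²/Δ < 1 whenever the two lines are distinct. -/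

import Mathlib

/-- The line `{(x,y) ∈ ℝ² : c x + d y = 0}` through the origin, as a linear subspace of the
Euclidean plane. -/
def lineThroughOrigin (c d : ℝ) : Submodule ℝ (EuclideanSpace ℝ (Fin 2)) where
  carrier := {p : EuclideanSpace ℝ (Fin 2) | c * p 0 + d * p 1 = 0}
  add_mem' := by
    intro a b ha hb
    simp only [Set.mem_setOf_eq, PiLp.add_apply] at *
    linarith
  zero_mem' := by simp
  smul_mem' := by
    intro t a ha
    simp only [Set.mem_setOf_eq, PiLp.smul_apply, smul_eq_mul] at *
    linear_combination t * ha

lemma mem_lineThroughOrigin {c d : ℝ} {p : EuclideanSpace ℝ (Fin 2)} :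
    p ∈ lineThroughOrigin c d ↔ c * p 0 + d * p 1 = 0 := Iff.rfl

lemma proj_coord (c d : ℝ) (h : c ^ 2 + d ^ 2 ≠ 0) (x : EuclideanSpace ℝ (Fin 2)) :
    ((Submodule.orthogonalProjectionOnto (lineThroughOrigin c d) x : EuclideanSpace ℝ (Fin 2)) 0
      = (d ^ 2 * x 0 - c * d * x 1) / (c ^ 2 + d ^ 2)) ∧
    ((Submodule.orthogonalProjectionOnto (lineThroughOrigin c d) x : EuclideanSpace ℝ (Fin 2)) 1
      = (c ^ 2 * x 1 - c * d * x 0) / (c ^ 2 + d ^ 2)) := by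
  have key : (Submodule.orthogonalProjectionOnto (lineThroughOrigin c d) x : EuclideanSpace ℝ (Fin 2)) =
      (WithLp.equiv 2 (Fin 2 → ℝ)).symm
        ![(d ^ 2 * x 0 - c * d * x 1) / (c ^ 2 + d ^ 2),
          (c ^ 2 * x 1 - c * d * x 0) / (c ^ 2 + d ^ 2)] := by
    rw [← Submodule.starProjection_apply]
    apply Submodule.eq_starProjection_of_mem_of_inner_eq_zero
    · rw [mem_lineThroughOrigin]
      simp only [WithLp.equiv_symm_apply, PiLp.toLp_apply, Matrix.cons_val_zero, Matrix.cons_val_one,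
        Matrix.head_cons]
      field_simp
      ring
    · intro w hw
      rw [mem_lineThroughOrigin] at hw
      rw [PiLp.inner_apply, Fin.sum_univ_two]
      simp only [RCLike.inner_apply, conj_trivial, PiLp.sub_apply,
        WithLp.equiv_symm_apply, PiLp.toLp_apply, Matrix.cons_val_zero, Matrix.cons_val_one, Matrix.head_cons]
      field_simp
      linear_combination (c * x 0 + d * x 1) * hw
  constructor <;> rw [key] <;>
    simp [WithLp.equiv_symm_apply, PiLp.toLp_apply]

/-- For lines `L₁ : αx + βy = 0` and `L₂ : Ax + By = 0` through the origin of
the Euclidean plane (with `(α,β) ≠ 0 ≠ (A,B)`), setting `ψ = αA + βB`, `ω = αB − βA`,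
`Δ = (α² + β²)(A² + B²)`, the Douglas–Rachford operator `T = (1/2)(I + R_{L₂} R_{L₁})` is
the linear map with standard matrix `(ψ/Δ)·[[ψ, −ω], [ω, ψ]]`; consequently
`‖T x‖² = (ψ²/Δ)‖x‖²`, and `ψ²/Δ ≤ 1` with equality iff `L₁ = L₂`; in particular
`ψ²/Δ < 1` whenever the lines are distinct. -/
theorem douglasRachford_two_origin_lines_matrix
    (α β A B : ℝ) (hαβ : (α, β) ≠ (0, 0)) (hAB : (A, B) ≠ (0, 0))
    (ψ ω Δ : ℝ) (hψ : ψ = α * A + β * B) (hω : ω = α * B - β * A)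
    (hΔ : Δ = (α ^ 2 + β ^ 2) * (A ^ 2 + B ^ 2))
    (T : EuclideanSpace ℝ (Fin 2) → EuclideanSpace ℝ (Fin 2))
    (hT : ∀ x, T x = (1 / 2 : ℝ) • (x +
      (2 • ((Submodule.orthogonalProjectionOnto (lineThroughOrigin A B)
          (2 • ((Submodule.orthogonalProjectionOnto (lineThroughOrigin α β) x : EuclideanSpace ℝ (Fin 2)))
            - x) : EuclideanSpace ℝ (Fin 2)))
        - (2 • ((Submodule.orthogonalProjectionOnto (lineThroughOrigin α β) x : EuclideanSpace ℝ (Fin 2)))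
            - x)))) :
    (∀ x : EuclideanSpace ℝ (Fin 2),
      T x 0 = ψ / Δ * (ψ * x 0 - ω * x 1) ∧
      T x 1 = ψ / Δ * (ω * x 0 + ψ * x 1)) ∧
    (∀ x : EuclideanSpace ℝ (Fin 2), ‖T x‖ ^ 2 = ψ ^ 2 / Δ * ‖x‖ ^ 2) ∧
    ψ ^ 2 / Δ ≤ 1 ∧
    (ψ ^ 2 / Δ = 1 ↔ lineThroughOrigin α β = lineThroughOrigin A B) ∧
    (lineThroughOrigin α β ≠ lineThroughOrigin A B → ψ ^ 2 / Δ < 1) := by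
  have h1 : α ≠ 0 ∨ β ≠ 0 := by
    by_contra h
    push_neg at h
    exact hαβ (by simp [h.1, h.2])
  have h2 : A ≠ 0 ∨ B ≠ 0 := by
    by_contra h
    push_neg at h
    exact hAB (by simp [h.1, h.2])
  have hs1 : (0:ℝ) < α ^ 2 + β ^ 2 := by rcases h1 with h | h <;> positivity
  have hs2 : (0:ℝ) < A ^ 2 + B ^ 2 := by rcases h2 with h | h <;> positivity
  have hΔpos : 0 < Δ := by rw [hΔ]; positivity
  have hΔne : Δ ≠ 0 := ne_of_gt hΔpos
  have hsum : ψ ^ 2 + ω ^ 2 = Δ := by rw [hψ, hω, hΔ]; ring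
  -- coordinate formulas
  have hcoord : ∀ x : EuclideanSpace ℝ (Fin 2),
      T x 0 = ψ / Δ * (ψ * x 0 - ω * x 1) ∧
      T x 1 = ψ / Δ * (ω * x 0 + ψ * x 1) := by
    intro x
    set p : EuclideanSpace ℝ (Fin 2) :=
      (Submodule.orthogonalProjectionOnto (lineThroughOrigin α β) x : EuclideanSpace ℝ (Fin 2)) with hp
    set y : EuclideanSpace ℝ (Fin 2) := 2 • p - x with hy
    set q : EuclideanSpace ℝ (Fin 2) :=
      (Submodule.orthogonalProjectionOnto (lineThroughOrigin A B) y : EuclideanSpace ℝ (Fin 2)) with hq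
    obtain ⟨hp0, hp1⟩ := proj_coord α β (ne_of_gt hs1) x
    obtain ⟨hq0, hq1⟩ := proj_coord A B (ne_of_gt hs2) y
    rw [← hp] at hp0 hp1
    rw [← hq] at hq0 hq1
    have hy0 : y 0 = 2 * p 0 - x 0 := by
      simp [hy, PiLp.sub_apply, PiLp.smul_apply]
    have hy1 : y 1 = 2 * p 1 - x 1 := by
      simp [hy, PiLp.sub_apply, PiLp.smul_apply]
    have hTx : T x = (1 / 2 : ℝ) • (x + (2 • q - y)) := hT x
    have hT0 : T x 0 = 1 / 2 * (x 0 + (2 * q 0 - y 0)) := by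
      rw [hTx]; simp [PiLp.smul_apply, PiLp.add_apply, PiLp.sub_apply]; ring
    have hT1 : T x 1 = 1 / 2 * (x 1 + (2 * q 1 - y 1)) := by
      rw [hTx]; simp [PiLp.smul_apply, PiLp.add_apply, PiLp.sub_apply]; ring
    rw [hy0, hy1] at hq0 hq1
    constructor
    · rw [hT0, hq0, hy0, hp0, hp1, hψ, hω, hΔ]
      field_simp
      ring
    · rw [hT1, hq1, hy1, hp0, hp1, hψ, hω, hΔ]
      field_simp
      ring
  refine ⟨hcoord, ?_, ?_, ?_, ?_⟩
  · intro x
    obtain ⟨h0, h1'⟩ := hcoord x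
    have hn : ∀ z : EuclideanSpace ℝ (Fin 2), ‖z‖ ^ 2 = z 0 ^ 2 + z 1 ^ 2 := by
      intro z
      rw [EuclideanSpace.norm_eq, Real.sq_sqrt (by positivity), Fin.sum_univ_two]
      simp [sq_abs]
    rw [hn, hn, h0, h1']
    have : (ψ / Δ * (ψ * x 0 - ω * x 1)) ^ 2 + (ψ / Δ * (ω * x 0 + ψ * x 1)) ^ 2
        = ψ ^ 2 / Δ ^ 2 * (ψ ^ 2 + ω ^ 2) * (x 0 ^ 2 + x 1 ^ 2) := by
      field_simp
      ring
    rw [this, hsum]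
    field_simp
  · rw [div_le_one hΔpos]; nlinarith [sq_nonneg ω]
  · have hiff : ω = 0 ↔ lineThroughOrigin α β = lineThroughOrigin A B := by
      constructor
      · intro h0
        have hw : α * B = β * A := by linarith [hω ▸ h0, hω]
        ext z
        rw [mem_lineThroughOrigin, mem_lineThroughOrigin]
        have hw' : α * B - β * A = 0 := by rw [← hω]; exact h0
        constructor
        · intro hz
          rcases h1 with h | h
          · have : α * (A * z 0 + B * z 1) = A * (α * z 0 + β * z 1) := by
              linear_combination z 1 * hw'
            rw [hz, mul_zero] at this
            exact (mul_eq_zero.mp this).resolve_left h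
          · have : β * (A * z 0 + B * z 1) = B * (α * z 0 + β * z 1) := by
              linear_combination (- z 0) * hw'
            rw [hz, mul_zero] at this
            exact (mul_eq_zero.mp this).resolve_left h
        · intro hz
          rcases h2 with h | h
          · have : A * (α * z 0 + β * z 1) = α * (A * z 0 + B * z 1) := by
              linear_combination (- z 1) * hw'
            rw [hz, mul_zero] at this
            exact (mul_eq_zero.mp this).resolve_left h
          · have : B * (α * z 0 + β * z 1) = β * (A * z 0 + B * z 1) := by
              linear_combination z 0 * hw'
            rw [hz, mul_zero] at this
            exact (mul_eq_zero.mp this).resolve_left h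
      · intro hL
        -- (β, -α) ∈ L₁, hence ∈ L₂
        have hmem : ((WithLp.equiv 2 (Fin 2 → ℝ)).symm ![β, -α]) ∈ lineThroughOrigin α β := by
          rw [mem_lineThroughOrigin]
          simp
          ring
        rw [hL, mem_lineThroughOrigin] at hmem
        simp only [WithLp.equiv_symm_apply, PiLp.toLp_apply, Matrix.cons_val_zero, Matrix.cons_val_one,
          Matrix.head_cons] at hmem
        rw [hω]; linarith
    rw [div_eq_one_iff_eq hΔne, ← hsum]
    constructor
    · intro h
      exact hiff.mp (by nlinarith)
    · intro h
      rw [hiff.mpr h]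
      ring
  · intro hne
    have hωne : ω ≠ 0 := by
      intro h
      have hiff2 : lineThroughOrigin α β = lineThroughOrigin A B := by
        have hw' : α * B - β * A = 0 := by rw [← hω]; exact h
        ext z
        rw [mem_lineThroughOrigin, mem_lineThroughOrigin]
        constructor
        · intro hz
          rcases h1 with h | h
          · have : α * (A * z 0 + B * z 1) = A * (α * z 0 + β * z 1) := by
              linear_combination z 1 * hw'
            rw [hz, mul_zero] at this
            exact (mul_eq_zero.mp this).resolve_left h
          · have : β * (A * z 0 + B * z 1) = B * (α * z 0 + β * z 1) := by
              linear_combination (- z 0) * hw'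
            rw [hz, mul_zero] at this
            exact (mul_eq_zero.mp this).resolve_left h
        · intro hz
          rcases h2 with h | h
          · have : A * (α * z 0 + β * z 1) = α * (A * z 0 + B * z 1) := by
              linear_combination (- z 1) * hw'
            rw [hz, mul_zero] at this
            exact (mul_eq_zero.mp this).resolve_left h
          · have : B * (α * z 0 + β * z 1) = β * (A * z 0 + B * z 1) := by
              linear_combination z 0 * hw'
            rw [hz, mul_zero] at this
            exact (mul_eq_zero.mp this).resolve_left h
      exact hne hiff2
    rw [div_lt_one hΔpos, ← hsum]
    nlinarith [sq_pos_of_ne_zero hωne]
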